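/- For all L, M ∈ 𝐋 and P = diag(P₁,…,P_T) ∈ 𝐎, the following are equivalent: (i) P ∈ 𝐎*(L,M); (ii) for every t = 1,…,T, both (MᵀL)_{t,t}Pₜᵀ and Pₜᵀ(MᵀL)_{t,t} are positive semidefinite; (iii) for every t = 1,…,T, tr((MᵀL)_{t,t}Pₜᵀ) = tr( ((MᵀL)_{t,t}ᵀ(MᵀL)_{t,t})^{1/2} ), i.e., equals the sum of the singular values of (MᵀL)_{t,t}. In particular, the identity matrix belongs to 𝐎*(L,M) if and only if (MᵀL)_{t,t} is positive semidefinite for all t = 1,…,T. -/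

import Mathlib

open Matrix Filter Topology

/-- Square matrices of size `dT × dT`, indexed by blocks: index `(t, i)` is
row/column `i` within block `t`. -/
abbrev Mat (d T : ℕ) := Matrix (Fin T × Fin d) (Fin T × Fin d) ℝ

/-- The `t`-th diagonal `d × d` block of a `dT × dT` matrix. -/
def blk {d T : ℕ} (A : Mat d T) (t : Fin T) : Matrix (Fin d) (Fin d) ℝ :=
  fun i j => A (t, i) (t, j)

/-- The `t`-th block column of a `dT × dT` matrix, a `dT × d` matrix. -/
def colBlk {d T : ℕ} (A : Mat d T) (t : Fin T) : Matrix (Fin T × Fin d) (Fin d) ℝ :=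
  fun p j => A p (t, j)

/-- Membership in `𝐋`: block lower triangular matrices. -/
def memL {d T : ℕ} (A : Mat d T) : Prop :=
  ∀ (t s : Fin T) (i j : Fin d), t < s → A (t, i) (s, j) = 0

/-- Membership in `𝐎`: block diagonal matrices with orthogonal `d × d` diagonal blocks
(equivalently: block diagonal and orthogonal). -/
def memO {d T : ℕ} (O : Mat d T) : Prop :=
  (∀ (t s : Fin T) (i j : Fin d), t ≠ s → O (t, i) (s, j) = 0) ∧ Oᵀ * O = 1

/-- The Frobenius norm of a real matrix. -/
noncomputable def frobNorm {m n : Type*} [Fintype m] [Fintype n] (A : Matrix m n ℝ) : ℝ :=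
  Real.sqrt (∑ i, ∑ j, (A i j) ^ 2)

/-- The Frobenius inner product of two real matrices. -/
noncomputable def frobInner {m n : Type*} [Fintype m] [Fintype n] (A B : Matrix m n ℝ) : ℝ :=
  ∑ i, ∑ j, A i j * B i j

/-- The adapted Bures–Wasserstein distance `d_ABW(L, M) = inf_{O ∈ 𝐎} ‖L - M O‖_F`. -/
noncomputable def dABW {d T : ℕ} (L M : Mat d T) : ℝ :=
  sInf {r : ℝ | ∃ O : Mat d T, memO O ∧ r = frobNorm (L - M * O)}

/-- The set `𝐎*(L, M)` of optimizers of `inf_{O ∈ 𝐎} ‖L - M O‖_F`. -/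
noncomputable def OStar {d T : ℕ} (L M : Mat d T) : Set (Mat d T) :=
  {O | memO O ∧ frobNorm (L - M * O) = dABW L M}

/-- The set `𝐕(L) = {M P - L : M ∈ 𝐋, P ∈ 𝐎*(L, M)}`. -/
noncomputable def VSet {d T : ℕ} (L : Mat d T) : Set (Mat d T) :=
  {V | ∃ M P : Mat d T, memL M ∧ P ∈ OStar L M ∧ V = M * P - L}

/-- The set `𝒱(L) = {V ∈ 𝐋 : (Vᵀ L)_{t,t} is symmetric for all t}`. -/
def calV {d T : ℕ} (L : Mat d T) : Set (Mat d T) :=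
  {V | memL V ∧ ∀ t : Fin T, (blk (Vᵀ * L) t).IsSymm}

/-- The set `𝐋^reg = {L ∈ 𝐋 : (Lᵀ L)_{t,t} is positive definite for all t}`. -/
def LReg {d T : ℕ} : Set (Mat d T) :=
  {L | memL L ∧ ∀ t : Fin T, (blk (Lᵀ * L) t).PosDef}

/-- The sum of the singular values of a real square matrix `A`,
i.e. the trace of the positive semidefinite square root of `Aᵀ A`. -/
noncomputable def svSum {n : ℕ} (A : Matrix (Fin n) (Fin n) ℝ) : ℝ :=
  ((Matrix.posSemidef_conjTranspose_mul_self A).1.eigenvectorUnitary.1 *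
    diagonal ((RCLike.ofReal : ℝ → ℝ) ∘ Real.sqrt ∘
      (Matrix.posSemidef_conjTranspose_mul_self A).1.eigenvalues) *
    (star (Matrix.posSemidef_conjTranspose_mul_self A).1.eigenvectorUnitary :
      Matrix (Fin n) (Fin n) ℝ)).trace

/-- The operator norm of a real matrix: the supremum of the euclidean norm `‖A x‖₂`
over the euclidean unit ball. -/
noncomputable def opNorm {m n : Type*} [Fintype m] [Fintype n] (A : Matrix m n ℝ) : ℝ :=
  sSup {r : ℝ | ∃ x : n → ℝ, (∑ j, (x j) ^ 2) ≤ 1 ∧ r = Real.sqrt (∑ i, (A.mulVec x i) ^ 2)}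


noncomputable def Matrix.PosSemidef.sqrt {n : Type*} [Fintype n] [DecidableEq n]
    {A : Matrix n n ℝ} (hA : A.PosSemidef) : Matrix n n ℝ :=
  hA.1.eigenvectorUnitary.1 * diagonal ((RCLike.ofReal : ℝ → ℝ) ∘ Real.sqrt ∘ hA.1.eigenvalues) *
    (star hA.1.eigenvectorUnitary : Matrix n n ℝ)

open scoped MatrixOrder in
theorem Matrix.PosSemidef.sqrt_eq_cfcSqrt {n : Type*} [Fintype n] [DecidableEq n]
    {A : Matrix n n ℝ} (hA : A.PosSemidef) : hA.sqrt = CFC.sqrt A := by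
  rw [CFC.sqrt_eq_real_sqrt A hA.nonneg, cfcₙ_eq_cfc, hA.1.cfc_eq, Matrix.IsHermitian.cfc, Unitary.conjStarAlgAut_apply]
  rfl

open scoped MatrixOrder in
theorem Matrix.PosSemidef.sqrt_mul_self {n : Type*} [Fintype n] [DecidableEq n]
    {A : Matrix n n ℝ} (hA : A.PosSemidef) : hA.sqrt * hA.sqrt = A := by
  rw [hA.sqrt_eq_cfcSqrt]; exact CFC.sqrt_mul_sqrt_self A hA.nonneg

open scoped MatrixOrder in
theorem Matrix.PosSemidef.posSemidef_sqrt {n : Type*} [Fintype n] [DecidableEq n]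
    {A : Matrix n n ℝ} (hA : A.PosSemidef) : hA.sqrt.PosSemidef := by
  rw [hA.sqrt_eq_cfcSqrt]; exact Matrix.nonneg_iff_posSemidef.mp (CFC.sqrt_nonneg A)

open scoped MatrixOrder in
theorem Matrix.PosSemidef.eq_sqrt_of_sq_eq {n : Type*} [Fintype n] [DecidableEq n]
    {A B : Matrix n n ℝ} (hA : A.PosSemidef) (hB : B.PosSemidef) (h : A ^ 2 = B) :
    A = hB.sqrt := by
  rw [hB.sqrt_eq_cfcSqrt]; exact (CFC.sqrt_unique (by rw [← sq]; exact h) hA.nonneg).symm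

section Aux
open Matrix
namespace Stmt2Aux

variable {m : Type*} [Fintype m] [DecidableEq m]

noncomputable def frobSq {m k : Type*} [Fintype m] [Fintype k] (X : Matrix m k ℝ) : ℝ :=
  (Xᵀ * X).trace

lemma frobSq_eq_sum {m k : Type*} [Fintype m] [Fintype k] (X : Matrix m k ℝ) :
    frobSq X = ∑ j, ∑ i, (X i j) ^ 2 := by
  simp [frobSq, Matrix.trace, Matrix.diag, Matrix.mul_apply, sq]

lemma frobSq_nonneg {m k : Type*} [Fintype m] [Fintype k] (X : Matrix m k ℝ) :
    0 ≤ frobSq X := by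
  rw [frobSq_eq_sum]; positivity

lemma eq_zero_of_frobSq_eq_zero {m k : Type*} [Fintype m] [Fintype k] {X : Matrix m k ℝ}
    (h : frobSq X = 0) : X = 0 := by
  rw [frobSq_eq_sum] at h
  ext i j
  have h1 : ∀ j ∈ Finset.univ, (0:ℝ) ≤ ∑ i, (X i j)^2 := fun j _ => by positivity
  have h2 := (Finset.sum_eq_zero_iff_of_nonneg h1).mp h j (Finset.mem_univ j)
  have h3 : ∀ i ∈ Finset.univ, (0:ℝ) ≤ (X i j)^2 := fun i _ => by positivity
  have h4 := (Finset.sum_eq_zero_iff_of_nonneg h3).mp h2 i (Finset.mem_univ i)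
  simpa using pow_eq_zero_iff (n := 2) (by norm_num) |>.mp h4

lemma transpose_eq_of_isHermitian {m : Type*} [Fintype m] {X : Matrix m m ℝ}
    (h : X.IsHermitian) : Xᵀ = X := by
  rw [← conjTranspose_eq_transpose_of_trivial]; exact h

lemma trace_psd_orth {S R : Matrix m m ℝ} (hS : S.PosSemidef) (hR : Rᵀ * R = 1) :
    (S * R).trace = S.trace - (1/2) * frobSq (hS.sqrt - hS.sqrt * R) := by
  have hRR : R * Rᵀ = 1 := mul_eq_one_comm.mp hR
  have hx : hS.sqrt * hS.sqrt = S := hS.sqrt_mul_self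
  have hx2 : ∀ B, hS.sqrt * (hS.sqrt * B) = S * B := fun B => by rw [← mul_assoc, hx]
  have hxt : hS.sqrtᵀ = hS.sqrt := transpose_eq_of_isHermitian hS.posSemidef_sqrt.1
  have hSt : Sᵀ = S := transpose_eq_of_isHermitian hS.1
  have e1 : (hS.sqrt - hS.sqrt * R)ᵀ * (hS.sqrt - hS.sqrt * R)
      = S - S * R - Rᵀ * (S - S * R) := by
    simp only [transpose_sub, transpose_mul, hxt, sub_mul, mul_sub, Matrix.mul_assoc, hx, hx2]
    abel
  have e2 : (Rᵀ * (S * R)).trace = S.trace := by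
    rw [trace_mul_comm, mul_assoc, hRR, mul_one]
  have e3 : (Rᵀ * S).trace = (S * R).trace := by
    rw [← trace_transpose (Rᵀ * S), transpose_mul, transpose_transpose, hSt]
  unfold frobSq
  rw [e1, mul_sub Rᵀ, trace_sub, trace_sub, trace_sub, e2, e3]
  ring

lemma trace_psd_orth_le {S R : Matrix m m ℝ} (hS : S.PosSemidef) (hR : Rᵀ * R = 1) :
    (S * R).trace ≤ S.trace := by
  have h := trace_psd_orth hS hR
  have h2 := frobSq_nonneg (hS.sqrt - hS.sqrt * R)
  linarith

lemma trace_psd_orth_eq {S R : Matrix m m ℝ} (hS : S.PosSemidef) (hR : Rᵀ * R = 1)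
    (h : (S * R).trace = S.trace) : S * R = S := by
  have h1 := trace_psd_orth hS hR
  have h2 := frobSq_nonneg (hS.sqrt - hS.sqrt * R)
  have h3 : frobSq (hS.sqrt - hS.sqrt * R) = 0 := by linarith
  have h4 := eq_zero_of_frobSq_eq_zero h3
  rw [← hS.sqrt_mul_self, mul_assoc, ← sub_eq_zero.mp h4, hS.sqrt_mul_self]

lemma dot_mulVec_mulVec (A : Matrix (Fin d) (Fin d) ℝ) (x y : Fin d → ℝ) :
    (A *ᵥ x) ⬝ᵥ (A *ᵥ y) = x ⬝ᵥ ((Aᴴ * A) *ᵥ y) := by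
  rw [conjTranspose_eq_transpose_of_trivial, ← Matrix.mulVec_mulVec,
    Matrix.dotProduct_mulVec x, Matrix.vecMul_transpose]

lemma exists_polar (A : Matrix (Fin d) (Fin d) ℝ) :
    ∃ U : Matrix (Fin d) (Fin d) ℝ, Uᵀ * U = 1 ∧
      A = U * (Matrix.posSemidef_conjTranspose_mul_self A).sqrt := by
  classical
  set hP := Matrix.posSemidef_conjTranspose_mul_self A with hPdef
  have hH : (Aᴴ * A).IsHermitian := hP.1
  set μ : Fin d → ℝ := hH.eigenvalues with hμdef
  set v := hH.eigenvectorBasis with hvdef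
  have hnn : ∀ i, 0 ≤ μ i := hP.eigenvalues_nonneg
  have hev : ∀ i, (Aᴴ * A) *ᵥ ⇑(v i) = μ i • ⇑(v i) := fun i => hH.mulVec_eigenvectorBasis i
  have hvv : ∀ i j, ⇑(v i) ⬝ᵥ ⇑(v j) = if i = j then (1:ℝ) else 0 := by
    intro i j
    have := (orthonormal_iff_ite.mp v.orthonormal) i j
    rw [← this]
    simp [PiLp.inner_apply, dotProduct, mul_comm]
  have hAv : ∀ i j, (A *ᵥ ⇑(v i)) ⬝ᵥ (A *ᵥ ⇑(v j)) = μ j * (if i = j then 1 else 0) := by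
    intro i j
    rw [dot_mulVec_mulVec, hev j, dotProduct_smul, hvv i j, smul_eq_mul]
  have hAz : ∀ i, μ i = 0 → A *ᵥ ⇑(v i) = 0 := by
    intro i hi
    have h0 : (A *ᵥ ⇑(v i)) ⬝ᵥ (A *ᵥ ⇑(v i)) = 0 := by rw [hAv i i, hi]; simp
    exact dotProduct_self_eq_zero.mp h0
  set w : Fin d → EuclideanSpace ℝ (Fin d) :=
    fun i => (Real.sqrt (μ i))⁻¹ • ((WithLp.equiv 2 _).symm (A *ᵥ ⇑(v i))) with hwdef
  have hw : ∀ i j, (inner ℝ (w i) (w j) : ℝ)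
      = (Real.sqrt (μ i))⁻¹ * ((Real.sqrt (μ j))⁻¹ * (μ j * (if i = j then 1 else 0))) := by
    intro i j
    rw [real_inner_smul_left, real_inner_smul_right]
    congr 1; congr 1
    rw [← hAv i j]
    simp [PiLp.inner_apply, dotProduct, mul_comm]
  have horth : Orthonormal ℝ (Set.restrict {i | μ i ≠ 0} w) := by
    rw [orthonormal_iff_ite]
    rintro ⟨i, hi⟩ ⟨j, hj⟩
    rw [show inner ℝ ({i | μ i ≠ 0}.restrict w ⟨i, hi⟩) ({i | μ i ≠ 0}.restrict w ⟨j, hj⟩)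
        = inner ℝ (w i) (w j) from rfl, hw i j]
    by_cases hij : i = j
    · subst hij
      simp only [if_pos rfl, Subtype.mk.injEq, mul_one]
      have hpos : 0 < μ i := lt_of_le_of_ne (hnn i) (Ne.symm hi)
      have hs : Real.sqrt (μ i) ≠ 0 := ne_of_gt (Real.sqrt_pos.mpr hpos)
      rw [← Real.sqrt_mul_self (hnn i)]
      field_simp
      rw [Real.sq_sqrt (Real.sqrt_nonneg _)]
    · have : (⟨i, hi⟩ : {i | μ i ≠ 0}) ≠ ⟨j, hj⟩ := by simpa using hij
      rw [if_neg hij, if_neg this]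
      ring
  obtain ⟨b, hb⟩ := horth.exists_orthonormalBasis_extension_of_card_eq
    (by simp [finrank_euclideanSpace])
  set Vm : Matrix (Fin d) (Fin d) ℝ := (hH.eigenvectorUnitary : Matrix (Fin d) (Fin d) ℝ)
    with hVmdef
  have hVm1 : star Vm * Vm = 1 := Unitary.coe_star_mul_self hH.eigenvectorUnitary
  have hVm2 : Vm * star Vm = 1 := Unitary.coe_mul_star_self hH.eigenvectorUnitary
  have hVmT : star Vm = Vmᵀ := by
    rw [Matrix.star_eq_conjTranspose, conjTranspose_eq_transpose_of_trivial]
  set U0 : Matrix (Fin d) (Fin d) ℝ := Matrix.of (fun k i => b i k) with hU0def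
  have hU0orth : U0ᵀ * U0 = 1 := by
    ext i j
    have hbij := (orthonormal_iff_ite.mp b.orthonormal) i j
    rw [PiLp.inner_apply] at hbij
    simp only [RCLike.inner_apply, starRingEnd_apply, star_trivial] at hbij
    rw [Matrix.mul_apply, Matrix.one_apply]
    rw [← hbij]
    simp [hU0def]
    exact Finset.sum_congr rfl fun x _ => mul_comm _ _
  have hClaim2 : A * Vm = U0 * diagonal (fun i => Real.sqrt (μ i)) := by
    ext k i
    rw [Matrix.mul_apply, Matrix.mul_diagonal]
    have hcol : ∑ l, A k l * Vm l i = (A *ᵥ ⇑(v i)) k := by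
      rw [Matrix.mulVec]
      simp [hVmdef, dotProduct]
      rfl
    rw [hcol]
    by_cases hi : μ i = 0
    · rw [hAz i hi, hi]
      simp
    · have hbw : b i = w i := hb i hi
      have hs : Real.sqrt (μ i) ≠ 0 :=
        ne_of_gt (Real.sqrt_pos.mpr (lt_of_le_of_ne (hnn i) (Ne.symm hi)))
      rw [hU0def]
      simp only [Matrix.of_apply, hbw, hwdef]
      rw [PiLp.smul_apply]
      simp only [smul_eq_mul, WithLp.equiv_symm_apply, PiLp.toLp_apply]
      field_simp
  have hClaim1 : hP.sqrt = Vm * diagonal (fun i => Real.sqrt (μ i)) * star Vm := by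
    rw [Matrix.PosSemidef.sqrt]
    congr 1
  refine ⟨U0 * star Vm, ?_, ?_⟩
  · rw [transpose_mul, hVmT, transpose_transpose, mul_assoc, ← mul_assoc U0ᵀ, hU0orth, one_mul,
      ← hVmT, hVm2]
  · rw [hClaim1]
    calc A = A * Vm * star Vm := by rw [mul_assoc, hVm2, mul_one]
    _ = U0 * diagonal (fun i => Real.sqrt (μ i)) * star Vm := by rw [hClaim2]
    _ = U0 * star Vm * ((Vm * diagonal fun i => Real.sqrt (μ i)) * star Vm) := by
        have h9 : U0 * star Vm * Vm = U0 := by rw [mul_assoc, hVm1, mul_one]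
        simp only [← mul_assoc]
        rw [h9]

variable {d : ℕ}

noncomputable def sv {n : ℕ} (A : Matrix (Fin n) (Fin n) ℝ) : ℝ :=
  (Matrix.posSemidef_conjTranspose_mul_self A).sqrt.trace

lemma trace_le_sv {n : ℕ} (A Q : Matrix (Fin n) (Fin n) ℝ) (hQ : Qᵀ * Q = 1) :
    (A * Qᵀ).trace ≤ sv A := by
  obtain ⟨U, hU, hA⟩ := exists_polar A
  set S := (Matrix.posSemidef_conjTranspose_mul_self A).sqrt with hS
  have hQQ : Q * Qᵀ = 1 := mul_eq_one_comm.mp hQ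
  have hR : (Qᵀ * U)ᵀ * (Qᵀ * U) = 1 := by
    rw [transpose_mul, transpose_transpose, mul_assoc, ← mul_assoc Q, hQQ, one_mul, hU]
  have htr : (A * Qᵀ).trace = (S * (Qᵀ * U)).trace := by
    rw [hA, mul_assoc, trace_mul_comm U, mul_assoc]
  rw [htr]
  exact trace_psd_orth_le (Matrix.posSemidef_conjTranspose_mul_self A).posSemidef_sqrt hR

lemma psd_pair_of_trace_eq {n : ℕ} (A Q : Matrix (Fin n) (Fin n) ℝ) (hQ : Qᵀ * Q = 1)
    (h : (A * Qᵀ).trace = sv A) : (Qᵀ * A).PosSemidef ∧ (A * Qᵀ).PosSemidef := by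
  obtain ⟨U, hU, hA⟩ := exists_polar A
  set S := (Matrix.posSemidef_conjTranspose_mul_self A).sqrt with hSdef
  have hSpsd : S.PosSemidef := (Matrix.posSemidef_conjTranspose_mul_self A).posSemidef_sqrt
  have hQQ : Q * Qᵀ = 1 := mul_eq_one_comm.mp hQ
  set R := Qᵀ * U with hRdef
  have hR : Rᵀ * R = 1 := by
    rw [hRdef, transpose_mul, transpose_transpose, mul_assoc, ← mul_assoc Q, hQQ, one_mul, hU]
  have hRR : R * Rᵀ = 1 := mul_eq_one_comm.mp hR
  have htr : (A * Qᵀ).trace = (S * R).trace := by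
    rw [hA, mul_assoc, trace_mul_comm U, mul_assoc, hRdef]
  have hSR : S * R = S := trace_psd_orth_eq hSpsd hR (by rw [← htr]; exact h)
  have hRtS : Rᵀ * S = S := by
    have := congrArg Matrix.transpose hSR
    rwa [transpose_mul, transpose_eq_of_isHermitian hSpsd.1] at this
  have hRS : R * S = S := by
    conv_lhs => rw [← hRtS]
    rw [← mul_assoc, hRR, one_mul]
  have hQA : Qᵀ * A = S := by
    rw [hA, ← mul_assoc]
    exact hRS
  have hAQ : A * Qᵀ = Q * S * Qᵀ := by
    rw [← hQA, ← mul_assoc, hQQ, one_mul]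
  constructor
  · rw [hQA]; exact hSpsd
  · rw [hAQ]
    have := hSpsd.mul_mul_conjTranspose_same Q
    rwa [conjTranspose_eq_transpose_of_trivial] at this

lemma trace_eq_of_psd {n : ℕ} (A Q : Matrix (Fin n) (Fin n) ℝ) (hQ : Qᵀ * Q = 1)
    (h : (A * Qᵀ).PosSemidef) : (A * Qᵀ).trace = sv A := by
  have hQQ : Q * Qᵀ = 1 := mul_eq_one_comm.mp hQ
  set B := A * Qᵀ with hBdef
  have hBQ : B * Q = A := by rw [hBdef, mul_assoc, hQ, mul_one]
  have hBt : Bᵀ = B := transpose_eq_of_isHermitian h.1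
  have hC : (Qᵀ * B * Q).PosSemidef := by
    have := h.conjTranspose_mul_mul_same Q
    rwa [conjTranspose_eq_transpose_of_trivial] at this
  have hC2 : (Qᵀ * B * Q) ^ 2 = Aᴴ * A := by
    rw [conjTranspose_eq_transpose_of_trivial, ← hBQ, pow_two, transpose_mul, hBt]
    simp only [mul_assoc]
    rw [← mul_assoc Q Qᵀ, hQQ, one_mul]
  have hCsq : Qᵀ * B * Q = (Matrix.posSemidef_conjTranspose_mul_self A).sqrt :=
    hC.eq_sqrt_of_sq_eq (Matrix.posSemidef_conjTranspose_mul_self A) hC2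
  have htr : (Qᵀ * B * Q).trace = B.trace := by
    rw [trace_mul_comm, ← mul_assoc, hQQ, one_mul]
  rw [sv, ← hCsq, htr]

lemma trace_eq_sv_iff {n : ℕ} (A Q : Matrix (Fin n) (Fin n) ℝ) (hQ : Qᵀ * Q = 1) :
    (A * Qᵀ).trace = sv A ↔ ((A * Qᵀ).PosSemidef ∧ (Qᵀ * A).PosSemidef) := by
  constructor
  · intro h
    obtain ⟨h1, h2⟩ := psd_pair_of_trace_eq A Q hQ h
    exact ⟨h2, h1⟩
  · intro h
    exact trace_eq_of_psd A Q hQ h.1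

section BlockLevel
variable {d T : ℕ}

lemma blk_orth {P : Mat d T} (hP : memO P) (t : Fin T) : (blk P t)ᵀ * blk P t = 1 := by
  ext i j
  have h := congrFun (congrFun hP.2 (t, i)) (t, j)
  rw [Matrix.mul_apply, Fintype.sum_prod_type] at h
  simp only [Matrix.transpose_apply] at h
  rw [Finset.sum_eq_single t (fun s _ hs => by
    apply Finset.sum_eq_zero
    intro k _
    rw [hP.1 s t k i hs, zero_mul]) (fun h => absurd (Finset.mem_univ t) h)] at h
  rw [Matrix.mul_apply, Matrix.one_apply]
  simp only [Matrix.transpose_apply, blk]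
  rw [h, Matrix.one_apply]
  simp [Prod.ext_iff]

lemma trace_blockdiag {O : Mat d T} (C : Mat d T)
    (hO : ∀ (t s : Fin T) (i j : Fin d), t ≠ s → O (t, i) (s, j) = 0) :
    (Oᵀ * C).trace = ∑ t, ((blk O t)ᵀ * blk C t).trace := by
  rw [Matrix.trace, Fintype.sum_prod_type]
  apply Finset.sum_congr rfl
  intro t _
  rw [Matrix.trace]
  apply Finset.sum_congr rfl
  intro i _
  rw [Matrix.diag_apply, Matrix.mul_apply, Fintype.sum_prod_type, Matrix.diag_apply,
    Matrix.mul_apply]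
  rw [Finset.sum_eq_single t (fun s _ hs => by
    apply Finset.sum_eq_zero
    intro k _
    simp only [Matrix.transpose_apply]
    rw [hO s t k i hs, zero_mul]) (fun h => absurd (Finset.mem_univ t) h)]
  simp [blk]

lemma frobSq_expand (L M O : Mat d T) (hO : memO O) :
    frobSq (L - M * O) = (Lᵀ * L).trace + (Mᵀ * M).trace - 2 * (Oᵀ * (Mᵀ * L)).trace := by
  have hOO : O * Oᵀ = 1 := mul_eq_one_comm.mp hO.2
  have e0 : (L - M * O)ᵀ * (L - M * O)
      = Lᵀ * L - Lᵀ * (M * O) - ((M * O)ᵀ * L - (M * O)ᵀ * (M * O)) := by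
    rw [transpose_sub, sub_mul, mul_sub, mul_sub]
  have e1 : ((M * O)ᵀ * (M * O)).trace = (Mᵀ * M).trace := by
    rw [transpose_mul, trace_mul_comm, mul_assoc M O, ← mul_assoc O Oᵀ, hOO, one_mul, trace_mul_comm]
  have e2 : ((M * O)ᵀ * L).trace = (Oᵀ * (Mᵀ * L)).trace := by
    rw [transpose_mul, mul_assoc]
  have e3 : (Lᵀ * (M * O)).trace = (Oᵀ * (Mᵀ * L)).trace := by
    rw [← trace_transpose (Lᵀ * (M * O)), transpose_mul, transpose_transpose, transpose_mul,
      mul_assoc]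
  unfold frobSq
  rw [e0, trace_sub, trace_sub, trace_sub, e1, e2, e3]
  ring

lemma frobNorm_eq_sqrt_frobSq {m k : Type*} [Fintype m] [Fintype k] (X : Matrix m k ℝ) :
    frobNorm X = Real.sqrt (frobSq X) := by
  rw [frobNorm, frobSq_eq_sum, Finset.sum_comm]

lemma exists_opt (C : Mat d T) :
    ∃ O : Mat d T, memO O ∧ ∀ t, (blk C t * (blk O t)ᵀ).trace = sv (blk C t) := by
  classical
  choose Q hQ1 hQ2 using fun t => exists_polar (blk C t)
  refine ⟨Matrix.of (fun p q => if p.1 = q.1 then Q p.1 p.2 q.2 else 0), ⟨?_, ?_⟩, ?_⟩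
  · intro t s i j hts
    simp [Matrix.of_apply, hts]
  · ext ⟨t, i⟩ ⟨s, j⟩
    rw [Matrix.mul_apply, Fintype.sum_prod_type]
    simp only [Matrix.transpose_apply, Matrix.of_apply]
    rw [Finset.sum_eq_single t (fun r _ hr => by
      apply Finset.sum_eq_zero
      intro k _
      rw [if_neg hr, zero_mul]) (fun h => absurd (Finset.mem_univ t) h)]
    by_cases hts : t = s
    · subst hts
      have := congrFun (congrFun (hQ1 t) i) j
      rw [Matrix.mul_apply] at this
      simp only [Matrix.transpose_apply] at this
      simpa [Matrix.one_apply, Prod.ext_iff] using this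
    · simp only [if_neg hts, mul_zero, Finset.sum_const_zero]
      rw [Matrix.one_apply_ne (by simp [Prod.ext_iff, hts])]
  · intro t
    have hblk : blk (Matrix.of fun (p q : Fin T × Fin d) =>
        if p.1 = q.1 then Q p.1 p.2 q.2 else 0) t = Q t := by
      ext i j
      simp [blk]
    rw [hblk]
    conv_lhs => rw [hQ2 t]
    rw [mul_assoc, trace_mul_comm, mul_assoc, hQ1 t, mul_one]
    rfl

end BlockLevel

section MainChar
variable {d T : ℕ}

lemma optim_char (L M P : Mat d T) (hP : memO P) :
    P ∈ OStar L M ↔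
      ∀ t, (blk (Mᵀ * L) t * (blk P t)ᵀ).trace = sv (blk (Mᵀ * L) t) := by
  classical
  have key0 : ∀ O : Mat d T, memO O → frobSq (L - M * O)
      = (Lᵀ * L).trace + (Mᵀ * M).trace
        - 2 * ∑ t, (blk (Mᵀ * L) t * (blk O t)ᵀ).trace := by
    intro O hO
    rw [frobSq_expand L M O hO, trace_blockdiag (Mᵀ * L) hO.1]
    rw [Finset.sum_congr rfl fun t _ => trace_mul_comm ((blk O t)ᵀ) (blk (Mᵀ * L) t)]
  have key1 : ∀ O : Mat d T, memO O → frobNorm (L - M * O)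
      = Real.sqrt ((Lᵀ * L).trace + (Mᵀ * M).trace
        - 2 * ∑ t, (blk (Mᵀ * L) t * (blk O t)ᵀ).trace) := by
    intro O hO
    rw [frobNorm_eq_sqrt_frobSq, key0 O hO]
  have key2 : ∀ O : Mat d T, memO O →
      ∀ t, (blk (Mᵀ * L) t * (blk O t)ᵀ).trace ≤ sv (blk (Mᵀ * L) t) :=
    fun O hO t => trace_le_sv _ _ (blk_orth hO t)
  have key3 : ∀ O : Mat d T, memO O →
      0 ≤ (Lᵀ * L).trace + (Mᵀ * M).trace
        - 2 * ∑ t, (blk (Mᵀ * L) t * (blk O t)ᵀ).trace := by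
    intro O hO
    rw [← key0 O hO]
    exact frobSq_nonneg _
  obtain ⟨O₀, hO₀, hopt⟩ := exists_opt (Mᵀ * L)
  have hf0 : ∑ t, (blk (Mᵀ * L) t * (blk O₀ t)ᵀ).trace = ∑ t, sv (blk (Mᵀ * L) t) :=
    Finset.sum_congr rfl fun t _ => hopt t
  have hm0 : 0 ≤ (Lᵀ * L).trace + (Mᵀ * M).trace - 2 * ∑ t, sv (blk (Mᵀ * L) t) := by
    rw [← hf0]; exact key3 O₀ hO₀
  have hdist : dABW L M = Real.sqrt ((Lᵀ * L).trace + (Mᵀ * M).trace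
      - 2 * ∑ t, sv (blk (Mᵀ * L) t)) := by
    unfold dABW
    apply le_antisymm
    · apply csInf_le
      · exact ⟨0, by
          rintro r ⟨O, hO, rfl⟩
          rw [frobNorm_eq_sqrt_frobSq]
          exact Real.sqrt_nonneg _⟩
      · exact ⟨O₀, hO₀, by rw [key1 O₀ hO₀, hf0]⟩
    · apply le_csInf
      · exact ⟨_, O₀, hO₀, rfl⟩
      · rintro r ⟨O, hO, rfl⟩
        rw [key1 O hO]
        apply Real.sqrt_le_sqrt
        have hs := Finset.sum_le_sum (fun t (_ : t ∈ Finset.univ) => key2 O hO t)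
        linarith
  constructor
  · rintro ⟨_, heq⟩
    rw [key1 P hP, hdist] at heq
    have hrad := (Real.sqrt_inj (key3 P hP) hm0).mp heq
    have hsum : ∑ t, (blk (Mᵀ * L) t * (blk P t)ᵀ).trace = ∑ t, sv (blk (Mᵀ * L) t) := by
      linarith
    intro t
    exact (Finset.sum_eq_sum_iff_of_le (fun t _ => key2 P hP t)).mp hsum t (Finset.mem_univ t)
  · intro h
    refine ⟨hP, ?_⟩
    rw [key1 P hP, hdist, Finset.sum_congr rfl fun t _ => h t]

lemma memO_one : memO (1 : Mat d T) := by
  constructor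
  · intro t s i j hts
    exact Matrix.one_apply_ne (by simp [Prod.ext_iff, hts])
  · rw [transpose_one, one_mul]

lemma blk_one (t : Fin T) : blk (1 : Mat d T) t = 1 := by
  ext i j
  simp [blk, Matrix.one_apply, Prod.ext_iff]

end MainChar

end Stmt2Aux
end Aux

/-- characterization of the optimizers `𝐎*(L,M)`. -/
theorem stmt2 (d T : ℕ) (hd : 0 < d) (hT : 0 < T) (L M P : Mat d T)
    (hL : memL L) (hM : memL M) (hP : memO P) :
    (P ∈ OStar L M ↔
      ∀ t : Fin T, (blk (Mᵀ * L) t * (blk P t)ᵀ).PosSemidef ∧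
        ((blk P t)ᵀ * blk (Mᵀ * L) t).PosSemidef) ∧
    (P ∈ OStar L M ↔
      ∀ t : Fin T, (blk (Mᵀ * L) t * (blk P t)ᵀ).trace = svSum (blk (Mᵀ * L) t)) ∧
    ((1 : Mat d T) ∈ OStar L M ↔ ∀ t : Fin T, (blk (Mᵀ * L) t).PosSemidef) := by
  have hiff2 : P ∈ OStar L M ↔
      ∀ t, (blk (Mᵀ * L) t * (blk P t)ᵀ).trace = svSum (blk (Mᵀ * L) t) :=
    Stmt2Aux.optim_char L M P hP
  have hiff1 : P ∈ OStar L M ↔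
      ∀ t, (blk (Mᵀ * L) t * (blk P t)ᵀ).PosSemidef ∧
        ((blk P t)ᵀ * blk (Mᵀ * L) t).PosSemidef := by
    rw [hiff2]
    apply forall_congr'
    intro t
    exact Stmt2Aux.trace_eq_sv_iff _ _ (Stmt2Aux.blk_orth hP t)
  have hiff3 : (1 : Mat d T) ∈ OStar L M ↔ ∀ t, (blk (Mᵀ * L) t).PosSemidef := by
    rw [Stmt2Aux.optim_char L M 1 Stmt2Aux.memO_one]
    apply forall_congr'
    intro t
    have h := Stmt2Aux.trace_eq_sv_iff (blk (Mᵀ * L) t) 1 (by rw [transpose_one, one_mul])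
    rw [transpose_one, mul_one, one_mul, and_self] at h
    rw [Stmt2Aux.blk_one, transpose_one, mul_one]
    exact h
  exact ⟨hiff1, hiff2, hiff3⟩
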